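/- An orbit of a flow through an interior periodic point whose period map does not fix the frontier stays in the interior: let χ be a continuous flow on a topological space X, let S ⊆ X, and let p be a point in the interior of S with χ(2, p) = p. If χ(2, q) ≠ q for every q in the frontier (topological boundary) of S, then χ(t, p) lies in the interior of S for every t ∈ ℝ. In particular χ(1, p) ∈ S, so the time-1 map of χ does not displace S off itself. -/
import Mathlib


/-- if `p` is an interior point of `S` with `χ (2, p) = p` and the time-2 map of
the flow `χ` fixes no point of the frontier of `S`, then the whole orbit of `p` stays in the
interior of `S`; in particular `χ (1, p) ∈ S`. -/
theorem orbit_stays_in_interior {X : Type*} [TopologicalSpace X] (χ : Flow ℝ X) (S : Set X)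
    (p : X) (hp : p ∈ interior S) (hper : χ.toFun 2 p = p)
    (hfr : ∀ q ∈ frontier S, χ.toFun 2 q ≠ q) :
    (∀ t : ℝ, χ.toFun t p ∈ interior S) ∧ χ.toFun 1 p ∈ S := by
  have hf : Continuous fun t : ℝ => χ.toFun t p :=
    χ.continuous continuous_id continuous_const
  -- the orbit never meets the frontier
  have horb : ∀ t : ℝ, χ.toFun t p ∉ frontier S := by
    intro t ht
    apply hfr _ ht
    calc χ.toFun 2 (χ.toFun t p) = χ.toFun (2 + t) p := (χ.map_add 2 t p).symm
      _ = χ.toFun (t + 2) p := by rw [add_comm]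
      _ = χ.toFun t (χ.toFun 2 p) := χ.map_add t 2 p
      _ = χ.toFun t p := by rw [hper]
  set A : Set ℝ := (fun t : ℝ => χ.toFun t p) ⁻¹' interior S with hA
  set B : Set ℝ := (fun t : ℝ => χ.toFun t p) ⁻¹' (closure S)ᶜ with hB
  have hAopen : IsOpen A := isOpen_interior.preimage hf
  have hBopen : IsOpen B := (isClosed_closure.isOpen_compl).preimage hf
  have hcover : A ∪ B = Set.univ := by
    ext t
    simp only [Set.mem_union, Set.mem_preimage, Set.mem_compl_iff, Set.mem_univ, iff_true, hA, hB]
    by_contra h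
    push_neg at h
    exact horb t ⟨h.2, h.1⟩
  have hdisj : A ∩ B = ∅ := by
    ext t
    simp only [Set.mem_inter_iff, Set.mem_preimage, Set.mem_compl_iff, Set.mem_empty_iff_false,
      iff_false, not_and, not_not, hA, hB]
    exact fun h => subset_closure (interior_subset h)
  have hclopen : IsClopen A := by
    refine ⟨?_, hAopen⟩
    have hcompl : Aᶜ = B := by
      apply Set.Subset.antisymm
      · intro t ht
        have := Set.eq_univ_iff_forall.mp hcover t
        rcases this with h | h
        · exact absurd h ht
        · exact h
      · intro t ht hA'
        exact absurd (Set.mem_inter hA' ht) (by rw [hdisj]; exact Set.notMem_empty t)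
    rw [← isOpen_compl_iff, hcompl]
    exact hBopen
  have hAuniv : A = Set.univ := by
    rcases isClopen_iff.mp hclopen with h | h
    · exfalso
      have h0 : (0:ℝ) ∈ A := by
        show χ.toFun 0 p ∈ interior S
        rw [χ.map_zero_apply]
        exact hp
      rw [h] at h0
      exact h0
    · exact h
  have hall : ∀ t : ℝ, χ.toFun t p ∈ interior S := fun t =>
    (Set.eq_univ_iff_forall.mp hAuniv t)
  exact ⟨hall, interior_subset (hall 1)⟩
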